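/- Let σ₁₂, σ₂₂, b₂₂, θ ∈ (0,∞), κ₂, u₃ ∈ ℝ, u₂ ∈ ℂ with Re u₂ ≤ 0, and u₄ ∈ (−∞,0]. Let K : [0,∞) → ℂ be differentiable with K(0) = u₂, Re K(t) ≤ 0 for all t ≥ 0, and K′(t) = (σ₁₂²/2)·K(t)² − b₂₂·K(t) − i·u₃·κ₂·e^{−θt} + u₄·σ₂₂²·e^{−2θt} for all t ≥ 0. Set C₂ := min(θ, b₂₂/2), C₃ := |u₂| + |κ₂·u₃|·K(b₂₂,θ), C₄ := (σ₁₂²/2)·C₃² − u₄·σ₂₂², and C₅ := −Re(u₂) + 2C₄/b₂₂, where K(b,θ) := 1/|b−θ| if b ≠ θ and K(b,θ) := 2/(e·b) if b = θ. Then |K(t)| ≤ √(C₅² + C₃²)·e^{−C₂ t} for all t ≥ 0. -/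

import Mathlib

open MeasureTheory Filter Real Complex

/-- The constant `K(b,θ)` from Step 3 of the proof of Proposition 4.1:
`K(b,θ) = 1/|b−θ|` if `b ≠ θ` and `K(b,θ) = 2/(e·b)` if `b = θ`. -/
noncomputable def expKernelConst (b θ : ℝ) : ℝ :=
  if b = θ then 2 / (Real.exp 1 * b) else 1 / |b - θ|

open Set in
/-- A fencing lemma: if `f 0 ≤ B 0` and `f' x ≤ B' x` whenever `B x ≤ f x`,
then `f ≤ B` on `[0, T]`. -/
lemma fence_le {f f' B B' : ℝ → ℝ} {T : ℝ}
    (hf : ContinuousOn f (Icc 0 T))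
    (hf' : ∀ x ∈ Ico 0 T, HasDerivWithinAt f (f' x) (Ici x) x)
    (hB : ContinuousOn B (Icc 0 T))
    (hB' : ∀ x ∈ Ico 0 T, HasDerivWithinAt B (B' x) (Ici x) x)
    (h0 : f 0 ≤ B 0)
    (bound : ∀ x ∈ Ico 0 T, B x ≤ f x → f' x ≤ B' x) :
    ∀ x ∈ Icc 0 T, f x ≤ B x := by
  intro x hx
  have hT : 0 ≤ T := le_trans hx.1 hx.2
  have Hr : ∀ r : ℝ, 0 < r → f x ≤ B x + r * x := by
    intro r hr
    have key := image_le_of_liminf_slope_right_lt_deriv_boundary' (a := 0) (b := T)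
      (f := f) (f' := f') hf
      (fun y hy r' hr' => (hf' y hy).liminf_right_slope_le hr')
      (B := fun y => B y + r * y) (B' := fun y => B' y + r)
      (by simpa using h0)
      (hB.add ((continuous_const.mul continuous_id).continuousOn))
      (fun y hy => (hB' y hy).add (by simpa using (hasDerivWithinAt_id y (Ici y)).const_mul r))
      (fun y hy hcontact => by
        have hry : 0 ≤ r * y := mul_nonneg hr.le hy.1
        have hBf : B y ≤ f y := by rw [hcontact]; linarith
        have := bound y hy hBf
        show f' y < B' y + r
        linarith)
    exact key hx
  by_contra hcon
  push_neg at hcon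
  have hd : 0 < f x - B x := by linarith
  have := Hr ((f x - B x) / (2 * (T + 1))) (by positivity)
  have hx1 : x ≤ T := hx.2
  have h2 : (f x - B x) / (2 * (T + 1)) * x ≤ (f x - B x) / 2 := by
    rw [div_mul_eq_mul_div, div_le_div_iff₀ (by positivity) (by norm_num)]
    nlinarith
  linarith

/-- The convolution kernel `J(t)` solving `J' = -b J + e^{-θ t}`, `J(0) = 0`. -/
noncomputable def auxJ (b θ t : ℝ) : ℝ :=
  if b = θ then t * Real.exp (-b * t) else (Real.exp (-θ * t) - Real.exp (-b * t)) / (b - θ)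

lemma expDeriv (c t : ℝ) : HasDerivAt (fun s => Real.exp (-c * s)) (-c * Real.exp (-c * t)) t := by
  have h := ((hasDerivAt_id t).const_mul (-c)).exp
  simpa [mul_comm] using h

lemma auxJ_hasDerivAt (b θ t : ℝ) :
    HasDerivAt (fun s => auxJ b θ s) (-b * auxJ b θ t + Real.exp (-θ * t)) t := by
  by_cases hbθ : b = θ
  · subst hbθ
    have h : HasDerivAt (fun s => s * Real.exp (-b * s))
        (1 * Real.exp (-b * t) + t * (-b * Real.exp (-b * t))) t :=
      (hasDerivAt_id t).mul (expDeriv b t)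
    have he : (fun s => auxJ b b s) = fun s => s * Real.exp (-b * s) := by
      funext s; simp [auxJ]
    rw [he]
    convert h using 1
    simp [auxJ]
    ring
  · have h : HasDerivAt (fun s => (Real.exp (-θ * s) - Real.exp (-b * s)) / (b - θ))
        ((-θ * Real.exp (-θ * t) - -b * Real.exp (-b * t)) / (b - θ)) t :=
      ((expDeriv θ t).sub (expDeriv b t)).div_const _
    have he : (fun s => auxJ b θ s) = fun s => (Real.exp (-θ * s) - Real.exp (-b * s)) / (b - θ) := by
      funext s; simp [auxJ, hbθ]
    rw [he]
    convert h using 1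
    have hne : b - θ ≠ 0 := sub_ne_zero.mpr hbθ
    simp only [auxJ, if_neg hbθ]
    field_simp
    ring

lemma auxJ_nonneg (b θ : ℝ) (t : ℝ) (ht : 0 ≤ t) : 0 ≤ auxJ b θ t := by
  by_cases hbθ : b = θ
  · simp only [auxJ, if_pos hbθ]
    positivity
  · simp only [auxJ, if_neg hbθ]
    rcases lt_or_gt_of_ne (fun h => hbθ h) with h | h
    · exact div_nonneg_of_nonpos
        (by simp only [sub_nonpos]; exact Real.exp_le_exp.mpr (by nlinarith)) (by linarith)
    · apply div_nonneg
      · simp only [sub_nonneg]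
        exact Real.exp_le_exp.mpr (by nlinarith)
      · linarith

lemma auxJ_le (b θ : ℝ) (hb : 0 < b) (hθ : 0 < θ) (t : ℝ) (ht : 0 ≤ t) :
    auxJ b θ t ≤ expKernelConst b θ * Real.exp (-(min θ (b / 2)) * t) := by
  by_cases hbθ : b = θ
  · subst hbθ
    simp only [auxJ, if_pos rfl, expKernelConst, if_pos rfl]
    have hmin : min b (b / 2) = b / 2 := min_eq_right (by linarith)
    rw [hmin]
    have key : t * Real.exp (-(b / 2) * t) ≤ 2 / (Real.exp 1 * b) := by
      set x := b / 2 * t with hx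
      have hx0 : 0 ≤ x := by positivity
      have h1 : x ≤ Real.exp (x - 1) := by
        have := Real.add_one_le_exp (x - 1); linarith
      have h2 : x * Real.exp (-x) ≤ (Real.exp 1)⁻¹ := by
        rw [← Real.exp_neg]
        calc x * Real.exp (-x) ≤ Real.exp (x - 1) * Real.exp (-x) := by
              apply mul_le_mul_of_nonneg_right h1 (Real.exp_pos _).le
          _ = Real.exp (-1) := by rw [← Real.exp_add]; ring_nf
      have hexppos := Real.exp_pos (-x)
      have hb2 : t = 2 / b * x := by rw [hx]; field_simp
      have h3 : Real.exp (-(b/2) * t) = Real.exp (-x) := by rw [hx]; ring_nf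
      calc t * Real.exp (-(b/2) * t) = 2 / b * (x * Real.exp (-x)) := by
            rw [h3, hx]; field_simp
        _ ≤ 2 / b * (Real.exp 1)⁻¹ := by
            apply mul_le_mul_of_nonneg_left h2 (by positivity)
        _ = 2 / (Real.exp 1 * b) := by field_simp
    calc t * Real.exp (-b * t) = t * Real.exp (-(b/2) * t) * Real.exp (-(b/2) * t) := by
          rw [mul_assoc, ← Real.exp_add]; norm_num; left; ring
      _ ≤ 2 / (Real.exp 1 * b) * Real.exp (-(b/2) * t) := by
          apply mul_le_mul_of_nonneg_right key (Real.exp_pos _).le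
  · simp only [auxJ, if_neg hbθ, expKernelConst, if_neg hbθ]
    have habs : |Real.exp (-θ * t) - Real.exp (-b * t)| ≤ Real.exp (-(min θ (b/2)) * t) := by
      have h1 : Real.exp (-θ * t) ≤ Real.exp (-(min θ (b/2)) * t) :=
        Real.exp_le_exp.mpr (by nlinarith [min_le_left θ (b/2)])
      have h2 : Real.exp (-b * t) ≤ Real.exp (-(min θ (b/2)) * t) :=
        Real.exp_le_exp.mpr (by nlinarith [min_le_right θ (b/2)])
      rw [abs_sub_le_iff]
      constructor <;> nlinarith [Real.exp_pos (-θ * t), Real.exp_pos (-b * t)]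
    calc (Real.exp (-θ * t) - Real.exp (-b * t)) / (b - θ)
        ≤ |(Real.exp (-θ * t) - Real.exp (-b * t)) / (b - θ)| := le_abs_self _
      _ = |Real.exp (-θ * t) - Real.exp (-b * t)| / |b - θ| := by rw [abs_div]
      _ ≤ Real.exp (-(min θ (b/2)) * t) / |b - θ| := by
          exact div_le_div_of_nonneg_right habs (abs_nonneg _)
      _ = 1 / |b - θ| * Real.exp (-(min θ (b/2)) * t) := by ring

set_option maxHeartbeats 1000000 in
open Set in
theorem riccati_second_component_decay
    (σ12 σ22 b22 θ : ℝ)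
    (hσ12 : 0 < σ12) (hσ22 : 0 < σ22) (hb22 : 0 < b22) (hθ : 0 < θ)
    (κ2 u3 : ℝ) (u2 : ℂ) (hu2 : u2.re ≤ 0) (u4 : ℝ) (hu4 : u4 ≤ 0)
    (K : ℝ → ℂ)
    (hK0 : K 0 = u2)
    (hKre : ∀ t, 0 ≤ t → (K t).re ≤ 0)
    (hK : ∀ t, 0 ≤ t → HasDerivAt K
      ((σ12 ^ 2 / 2 : ℂ) * K t ^ 2 - (b22 : ℂ) * K t
        - Complex.I * (u3 : ℂ) * (κ2 : ℂ) * (Real.exp (-θ * t) : ℂ)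
        + (u4 : ℂ) * (σ22 ^ 2 : ℂ) * (Real.exp (-2 * θ * t) : ℂ)) t)
    (C2 C3 C4 C5 : ℝ)
    (hC2 : C2 = min θ (b22 / 2))
    (hC3 : C3 = ‖u2‖ + |κ2 * u3| * expKernelConst b22 θ)
    (hC4 : C4 = σ12 ^ 2 / 2 * C3 ^ 2 - u4 * σ22 ^ 2)
    (hC5 : C5 = -u2.re + 2 * C4 / b22) :
    ∀ t, 0 ≤ t →
      ‖K t‖ ≤ Real.sqrt (C5 ^ 2 + C3 ^ 2) * Real.exp (-C2 * t) := by
  have hEK0 : 0 ≤ expKernelConst b22 θ := by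
    unfold expKernelConst
    split <;> positivity
  have habs0 : 0 ≤ ‖u2‖ := norm_nonneg _
  have hA0 : (0:ℝ) ≤ |κ2 * u3| := abs_nonneg _
  have hC2θ : C2 ≤ θ := by rw [hC2]; exact min_le_left _ _
  have hC2b : C2 ≤ b22 / 2 := by rw [hC2]; exact min_le_right _ _
  have hC2pos : 0 < C2 := by rw [hC2]; exact lt_min hθ (by linarith)
  have hC30 : 0 ≤ C3 := by rw [hC3]; exact add_nonneg habs0 (mul_nonneg hA0 hEK0)
  have hC40 : 0 ≤ C4 := by
    rw [hC4]
    have h1 : 0 ≤ σ12 ^ 2 / 2 * C3 ^ 2 := by positivity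
    have h2 : 0 ≤ -u4 * σ22 ^ 2 := mul_nonneg (by linarith) (by positivity)
    linarith
  have hC5C4 : 2 * C4 / b22 ≤ C5 := by
    rw [hC5]
    have : 0 ≤ -u2.re := by linarith
    linarith
  have hC50 : 0 ≤ C5 := le_trans (by positivity) hC5C4
  -- derivatives of the real and imaginary parts
  have hKimD : ∀ s, 0 ≤ s → HasDerivAt (fun r => (K r).im)
      (σ12 ^ 2 * ((K s).re * (K s).im) - b22 * (K s).im - u3 * κ2 * Real.exp (-θ * s)) s := by
    intro s hs
    have h := Complex.imCLM.hasFDerivAt.comp_hasDerivAt s (hK s hs)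
    refine h.congr_deriv ?_
    simp [Complex.add_im, Complex.sub_im, Complex.mul_im, Complex.mul_re, Complex.I_re,
      Complex.I_im, Complex.ofReal_re, Complex.ofReal_im, Complex.div_im, Complex.div_re,
      pow_two, Complex.normSq_apply, -Complex.ofReal_exp]
    ring
  have hKreD : ∀ s, 0 ≤ s → HasDerivAt (fun r => (K r).re)
      (σ12 ^ 2 / 2 * ((K s).re * (K s).re - (K s).im * (K s).im) - b22 * (K s).re
        + u4 * σ22 ^ 2 * Real.exp (-2 * θ * s)) s := by
    intro s hs
    have h := Complex.reCLM.hasFDerivAt.comp_hasDerivAt s (hK s hs)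
    refine h.congr_deriv ?_
    simp [Complex.add_re, Complex.sub_re, Complex.mul_im, Complex.mul_re, Complex.I_re,
      Complex.I_im, Complex.ofReal_re, Complex.ofReal_im, Complex.div_im, Complex.div_re,
      pow_two, Complex.normSq_apply, -Complex.ofReal_exp]
    try ring
  -- Stage 1: bound on the imaginary part
  set Bw : ℝ → ℝ := fun s => |κ2 * u3| * auxJ b22 θ s + ‖u2‖ * Real.exp (-b22 * s)
    with hBwdef
  have hBw_deriv : ∀ s, HasDerivAt Bw
      (-b22 * Bw s + |κ2 * u3| * Real.exp (-θ * s)) s := by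
    intro s
    have h1 := (auxJ_hasDerivAt b22 θ s).const_mul (|κ2 * u3|)
    have h2 := (expDeriv b22 s).const_mul (‖u2‖)
    have h := h1.add h2
    refine h.congr_deriv ?_
    simp only [Bw]
    try ring
  have hBw_nonneg : ∀ s, 0 ≤ s → 0 ≤ Bw s := fun s hs =>
    add_nonneg (mul_nonneg hA0 (auxJ_nonneg _ _ s hs)) (mul_nonneg habs0 (Real.exp_pos _).le)
  have hBw0 : Bw 0 = ‖u2‖ := by
    have hJ0 : auxJ b22 θ 0 = 0 := by unfold auxJ; split <;> simp
    simp [hBwdef, hJ0]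
  have hw_le : ∀ s, 0 ≤ s → |(K s).im| ≤ Bw s := by
    intro s hs
    have hBcont : ContinuousOn Bw (Icc 0 s) := fun x _ =>
      (hBw_deriv x).continuousAt.continuousWithinAt
    have hBd : ∀ x ∈ Ico 0 s, HasDerivWithinAt Bw
        (-b22 * Bw x + |κ2 * u3| * Real.exp (-θ * x)) (Ici x) x := fun x _ =>
      (hBw_deriv x).hasDerivWithinAt
    have hup : (K s).im ≤ Bw s := by
      refine fence_le (f := fun r => (K r).im)
        (f' := fun x => σ12 ^ 2 * ((K x).re * (K x).im) - b22 * (K x).im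
          - u3 * κ2 * Real.exp (-θ * x)) (T := s)
        (fun x hx => ((hKimD x hx.1).continuousAt.continuousWithinAt))
        (fun x hx => (hKimD x hx.1).hasDerivWithinAt)
        hBcont hBd ?_ ?_ s ⟨hs, le_refl s⟩
      · show (K 0).im ≤ Bw 0
        rw [hK0, hBw0]
        exact (le_abs_self _).trans (Complex.abs_im_le_norm u2)
      · intro x hx hc
        have him0 : 0 ≤ (K x).im := (hBw_nonneg x hx.1).trans hc
        have hre := hKre x hx.1
        have hE := (Real.exp_pos (-θ * x)).le
        have t1 : σ12 ^ 2 * ((K x).re * (K x).im) ≤ 0 :=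
          mul_nonpos_iff.mpr (Or.inl ⟨sq_nonneg σ12, mul_nonpos_iff.mpr (Or.inr ⟨hre, him0⟩)⟩)
        have t2 : -(u3 * κ2) * Real.exp (-θ * x) ≤ |κ2 * u3| * Real.exp (-θ * x) := by
          apply mul_le_mul_of_nonneg_right _ hE
          rw [mul_comm κ2 u3]
          exact neg_le_abs _
        have t3 : b22 * Bw x ≤ b22 * (K x).im := mul_le_mul_of_nonneg_left hc hb22.le
        nlinarith [t1, t2, t3]
    have hlo : -(K s).im ≤ Bw s := by
      refine fence_le (f := fun r => -(K r).im)
        (f' := fun x => -(σ12 ^ 2 * ((K x).re * (K x).im) - b22 * (K x).im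
          - u3 * κ2 * Real.exp (-θ * x))) (T := s)
        (fun x hx => ((hKimD x hx.1).neg.continuousAt.continuousWithinAt))
        (fun x hx => (hKimD x hx.1).neg.hasDerivWithinAt)
        hBcont hBd ?_ ?_ s ⟨hs, le_refl s⟩
      · show -(K 0).im ≤ Bw 0
        rw [hK0, hBw0]
        exact (neg_le_abs _).trans (Complex.abs_im_le_norm u2)
      · intro x hx hc
        have him0 : (K x).im ≤ 0 := by
          have := hBw_nonneg x hx.1; linarith
        have hre := hKre x hx.1
        have hE := (Real.exp_pos (-θ * x)).le
        have hrim : 0 ≤ (K x).re * (K x).im := by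
          nlinarith [mul_nonneg (neg_nonneg.mpr hre) (neg_nonneg.mpr him0)]
        have t1 : 0 ≤ σ12 ^ 2 * ((K x).re * (K x).im) :=
          mul_nonneg (sq_nonneg σ12) hrim
        have t2 : u3 * κ2 * Real.exp (-θ * x) ≤ |κ2 * u3| * Real.exp (-θ * x) := by
          apply mul_le_mul_of_nonneg_right _ hE
          rw [mul_comm κ2 u3]
          exact le_abs_self _
        have t3 : b22 * Bw x ≤ b22 * -(K x).im := mul_le_mul_of_nonneg_left hc hb22.le
        nlinarith [t1, t2, t3]
    exact abs_le.mpr ⟨by linarith, hup⟩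
  have hwC3 : ∀ s, 0 ≤ s → |(K s).im| ≤ C3 * Real.exp (-C2 * s) := by
    intro s hs
    refine (hw_le s hs).trans ?_
    have h1 : auxJ b22 θ s ≤ expKernelConst b22 θ * Real.exp (-C2 * s) := by
      have := auxJ_le b22 θ hb22 hθ s hs
      rwa [← hC2] at this
    have h2 : Real.exp (-b22 * s) ≤ Real.exp (-C2 * s) :=
      Real.exp_le_exp.mpr (by nlinarith)
    calc Bw s ≤ |κ2 * u3| * (expKernelConst b22 θ * Real.exp (-C2 * s))
          + ‖u2‖ * Real.exp (-C2 * s) := by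
          apply add_le_add (mul_le_mul_of_nonneg_left h1 hA0)
            (mul_le_mul_of_nonneg_left h2 habs0)
      _ = C3 * Real.exp (-C2 * s) := by rw [hC3]; ring
  -- Stage 2: bound on (minus) the real part
  have hv_le : ∀ s, 0 ≤ s → -(K s).re ≤ C5 * Real.exp (-C2 * s) := by
    intro s hs
    have hBderiv : ∀ x, HasDerivAt (fun r => C5 * Real.exp (-C2 * r))
        (C5 * (-C2 * Real.exp (-C2 * x))) x := fun x => (expDeriv C2 x).const_mul C5
    refine fence_le (f := fun r => -(K r).re)
      (f' := fun x => -(σ12 ^ 2 / 2 * ((K x).re * (K x).re - (K x).im * (K x).im)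
        - b22 * (K x).re + u4 * σ22 ^ 2 * Real.exp (-2 * θ * x)))
      (B := fun r => C5 * Real.exp (-C2 * r))
      (B' := fun x => C5 * (-C2 * Real.exp (-C2 * x))) (T := s)
      (fun x hx => ((hKreD x hx.1).neg.continuousAt.continuousWithinAt))
      (fun x hx => (hKreD x hx.1).neg.hasDerivWithinAt)
      (fun x _ => (hBderiv x).continuousAt.continuousWithinAt)
      (fun x _ => (hBderiv x).hasDerivWithinAt)
      ?_ ?_ s ⟨hs, le_refl s⟩
    · show -(K 0).re ≤ C5 * Real.exp (-C2 * 0)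
      rw [hK0]
      simp only [mul_zero, neg_zero, Real.exp_zero, mul_one]
      have : 0 ≤ 2 * C4 / b22 := by positivity
      rw [hC5]; linarith
    · intro x hx hc
      set E := Real.exp (-C2 * x) with hE_def
      have hE0 : 0 < E := Real.exp_pos _
      have hE1 : E ≤ 1 := by
        rw [hE_def, ← Real.exp_zero]
        apply Real.exp_le_exp.mpr
        nlinarith [hx.1]
      have hw := hwC3 x hx.1
      have h2 : (K x).im * (K x).im ≤ (C3 * E) * (C3 * E) := by
        calc (K x).im * (K x).im = |(K x).im| * |(K x).im| := (abs_mul_abs_self _).symm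
          _ ≤ (C3 * E) * (C3 * E) := mul_le_mul hw hw (abs_nonneg _) (by positivity)
      have hexpθ : Real.exp (-2 * θ * x) ≤ E * E := by
        rw [hE_def, ← Real.exp_add]
        apply Real.exp_le_exp.mpr
        nlinarith [hx.1]
      have t1 : -(σ12 ^ 2 / 2) * ((K x).re * (K x).re) ≤ 0 := by nlinarith [sq_nonneg ((K x).re), sq_nonneg σ12]
      have t2 : σ12 ^ 2 / 2 * ((K x).im * (K x).im) ≤ σ12 ^ 2 / 2 * ((C3 * E) * (C3 * E)) :=
        mul_le_mul_of_nonneg_left h2 (by positivity)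
      have t3 : -u4 * σ22 ^ 2 * Real.exp (-2 * θ * x) ≤ -u4 * σ22 ^ 2 * (E * E) :=
        mul_le_mul_of_nonneg_left hexpθ (mul_nonneg (by linarith) (by positivity))
      have t4 : b22 * (C5 * E) ≤ b22 * -(K x).re := mul_le_mul_of_nonneg_left hc hb22.le
      have h5 : C4 ≤ (b22 - C2) * C5 := by
        have h6 : b22 / 2 * (2 * C4 / b22) = C4 := by field_simp
        have h7 : b22 / 2 * (2 * C4 / b22) ≤ (b22 - C2) * C5 := by
          apply mul_le_mul (by linarith) hC5C4 (by positivity) (by linarith)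
        linarith
      have h8 : C4 * (E * E) ≤ (b22 - C2) * C5 * E := by
        have h9 : C4 * E ≤ (b22 - C2) * C5 := by nlinarith
        calc C4 * (E * E) = (C4 * E) * E := by ring
          _ ≤ ((b22 - C2) * C5) * E := mul_le_mul_of_nonneg_right h9 hE0.le
      rw [hC4] at h8
      nlinarith [t1, t2, t3, t4, h8]
  -- conclusion
  intro t ht
  have hv := hv_le t ht
  have hw := hwC3 t ht
  have hv0 : 0 ≤ -(K t).re := by linarith [hKre t ht]
  set E := Real.exp (-C2 * t) with hE_def
  have hE0 : 0 < E := Real.exp_pos _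
  have h1 : (K t).re * (K t).re ≤ (C5 * E) * (C5 * E) := by
    nlinarith
  have h2 : (K t).im * (K t).im ≤ (C3 * E) * (C3 * E) := by
    calc (K t).im * (K t).im = |(K t).im| * |(K t).im| := (abs_mul_abs_self _).symm
      _ ≤ (C3 * E) * (C3 * E) := mul_le_mul hw hw (abs_nonneg _) (by positivity)
  rw [Complex.norm_def, Complex.normSq_apply]
  calc Real.sqrt ((K t).re * (K t).re + (K t).im * (K t).im)
      ≤ Real.sqrt ((C5 ^ 2 + C3 ^ 2) * E ^ 2) := by
        apply Real.sqrt_le_sqrt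
        nlinarith
    _ = Real.sqrt (C5 ^ 2 + C3 ^ 2) * E := by
        rw [Real.sqrt_mul (by positivity), Real.sqrt_sq hE0.le]
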